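/- Let (K,S) ∈ 𝕄, n ≥ 1, A_max = max_{1≤l≤L} A_l, and let either (Case 1) η(ε) = (1+ε)^{L+1} − 1 and ξ = 4·√(A_max)·√L / (2^{L+1} − 1), or (Case 2) η(ε) = (1+ε)·(1 + 2√2 ε + √2 ε²)^L − 1 and ξ = 4·√(A_max)·√L / (2·(1+3√2)^L − 1). If either (ξ < 1 and K ≤ n) or n > ξ²·K, then √n·η(1)² > φ_{(K,S)}(η(1)); consequently every σ ∈ (0, η(1)] satisfying φ_{(K,S)}(σ) = √n·σ² satisfies σ < η(1). -/

import Mathlib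

open Real BigOperators

noncomputable section

/-- The collection 𝕄 of model indices `(K, S)`. -/
def Mset (L : ℕ) : Set (ℕ × Finset (Fin L)) :=
  {p | (p.1 = 1 ∧ p.2 = ∅) ∨ (2 ≤ p.1 ∧ p.2.Nonempty)}

/-- Dimension `D_{(K,S)}` of the model `M_{(K,S)}`. -/
def Dks {L : ℕ} (A : Fin L → ℕ) (K : ℕ) (S : Finset (Fin L)) : ℕ :=
  (K - 1) + K * ∑ l ∈ S, (A l - 1) + ∑ l ∈ Sᶜ, (A l - 1)

/-- The complexity constant `C_{(K,S)}`. -/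
def Cks {L : ℕ} (A : Fin L → ℕ) (K : ℕ) (S : Finset (Fin L)) : ℝ :=
  (Real.log (2 * Real.pi * Real.exp 1) * (Dks A K S : ℝ)
    + Real.log (4 * Real.pi * Real.exp 1)
        * ((if 2 ≤ K then (1 : ℝ) else 0) + (L : ℝ) + ((K : ℝ) - 1) * (S.card : ℝ))
    + (if 2 ≤ K then Real.log ((K : ℝ) + 1) else 0)
    + ∑ l, Real.log ((A l : ℝ) + 1)
    + ((K : ℝ) - 1) * ∑ l ∈ S, Real.log ((A l : ℝ) + 1)) / 2

/-- The function `η` of Case 1. -/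
def etaCase1 (L : ℕ) (x : ℝ) : ℝ := (1 + x) ^ (L + 1) - 1

/-- The function `η` of Case 2. -/
def etaCase2 (L : ℕ) (x : ℝ) : ℝ :=
  (1 + x) * (1 + 2 * Real.sqrt 2 * x + Real.sqrt 2 * x ^ 2) ^ L - 1

/-- `A_max`. -/
def Amax {L : ℕ} (A : Fin L → ℕ) : ℕ := Finset.univ.sup A

/-- The function `φ_{(K,S)}`, written in terms of the inverse `g` of `η`. -/
def phiKS {L : ℕ} (A : Fin L → ℕ) (K : ℕ) (S : Finset (Fin L)) (g : ℝ → ℝ) (σ : ℝ) : ℝ :=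
  (2 * Real.sqrt (Real.log 2) * Real.sqrt (Dks A K S)
    + Real.sqrt (Cks A K S - (Dks A K S : ℝ) * Real.log (g σ))) * σ


/-- Numeric bound on `log π`. -/
lemma logpi_le' : Real.log Real.pi ≤ 1.2 := by
  rw [Real.log_le_iff_le_exp Real.pi_pos]
  have h2 : Real.exp 1.2 = Real.exp 1 * Real.exp 0.2 := by
    rw [← Real.exp_add]; norm_num
  have h3 := Real.exp_one_gt_d9
  have h4 : (0.2:ℝ) + 1 ≤ Real.exp 0.2 := Real.add_one_le_exp 0.2
  have h5 := Real.pi_lt_d2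
  nlinarith [Real.exp_pos (0.2:ℝ)]

lemma log2pie_le' : Real.log (2 * Real.pi * Real.exp 1) ≤ 2.9 := by
  rw [Real.log_mul (by positivity) (by positivity),
    Real.log_mul (by norm_num) (by positivity), Real.log_exp]
  have := Real.log_two_lt_d9
  have := logpi_le'
  linarith

lemma log4pie_le' : Real.log (4 * Real.pi * Real.exp 1) ≤ 3.6 := by
  rw [Real.log_mul (by positivity) (by positivity),
    Real.log_mul (by norm_num) (by positivity), Real.log_exp]
  have h4 : Real.log 4 = 2 * Real.log 2 := by
    rw [show (4:ℝ) = 2^2 by norm_num, Real.log_pow]; push_cast; ring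
  have := Real.log_two_lt_d9
  have := logpi_le'
  linarith

lemma Dks_le' {L : ℕ} (hL : 1 ≤ L) (A : Fin L → ℕ) (hA : ∀ l, 2 ≤ A l) (K : ℕ) (hK : 1 ≤ K)
    (S : Finset (Fin L)) : (Dks A K S : ℝ) ≤ (K : ℝ) * L * Amax A := by
  have hAm : ∀ l, A l ≤ Amax A := fun l => Finset.le_sup (Finset.mem_univ l)
  have h1 : ∑ l ∈ S, (A l - 1) ≤ S.card * (Amax A - 1) := by
    simpa using Finset.sum_le_card_nsmul S (fun l => A l - 1) (Amax A - 1)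
      (fun l _ => Nat.sub_le_sub_right (hAm l) 1)
  have h2 : ∑ l ∈ Sᶜ, (A l - 1) ≤ (L - S.card) * (Amax A - 1) := by
    have := Finset.sum_le_card_nsmul Sᶜ (fun l => A l - 1) (Amax A - 1)
      (fun l _ => Nat.sub_le_sub_right (hAm l) 1)
    simpa [Finset.card_compl] using this
  have hs : S.card ≤ L := by simpa using Finset.card_le_univ S
  have hAm2 : 2 ≤ Amax A := le_trans (hA ⟨0, hL⟩) (hAm _)
  have hAm1 : 1 ≤ Amax A := by omega
  have hDnat : Dks A K S ≤ (K - 1) + K * (S.card * (Amax A - 1)) + (L - S.card) * (Amax A - 1) := by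
    unfold Dks; gcongr
  have hcast : (((K - 1) + K * (S.card * (Amax A - 1)) + (L - S.card) * (Amax A - 1) : ℕ) : ℝ)
      = ((K:ℝ) - 1) + (K:ℝ) * ((S.card:ℝ) * ((Amax A:ℝ) - 1)) + ((L:ℝ) - S.card) * ((Amax A:ℝ) - 1) := by
    push_cast [Nat.cast_sub hK, Nat.cast_sub hs, Nat.cast_sub hAm1]
    ring
  have hD' : (Dks A K S : ℝ) ≤ ((K:ℝ) - 1) + (K:ℝ) * ((S.card:ℝ) * ((Amax A:ℝ) - 1)) + ((L:ℝ) - S.card) * ((Amax A:ℝ) - 1) := by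
    rw [← hcast]; exact_mod_cast hDnat
  have hk : (1:ℝ) ≤ K := by exact_mod_cast hK
  have hl : (1:ℝ) ≤ L := by exact_mod_cast hL
  have ha : (2:ℝ) ≤ Amax A := by exact_mod_cast hAm2
  have hs' : (S.card:ℝ) ≤ L := by exact_mod_cast hs
  have hla : (2:ℝ) ≤ (L:ℝ) * (Amax A) := by nlinarith
  rcases Nat.eq_zero_or_pos S.card with h0 | h1'
  · rw [h0] at hD'
    push_cast at hD'
    nlinarith [mul_nonneg (sub_nonneg.mpr hk) (sub_nonneg.mpr hla)]
  · have hs1 : (1:ℝ) ≤ S.card := by exact_mod_cast h1'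
    nlinarith [mul_nonneg (mul_nonneg (show (0:ℝ) ≤ Amax A by linarith) (sub_nonneg.mpr hk)) (sub_nonneg.mpr hs'),
      mul_nonneg (sub_nonneg.mpr hk) (sub_nonneg.mpr hs1)]

lemma fac_le' {K L sc am : ℝ} (hk : 1 ≤ K) (hl : 1 ≤ L) (ha : 2 ≤ am) (hs : sc ≤ L) (hs0 : 0 ≤ sc) :
    1 + L + (K - 1) * sc ≤ K * L * am := by
  nlinarith [mul_nonneg (sub_nonneg.mpr hk) (sub_nonneg.mpr hs), mul_nonneg (sub_nonneg.mpr hk) hs0]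

lemma Cks_le' {L : ℕ} (hL : 1 ≤ L) (A : Fin L → ℕ) (hA : ∀ l, 2 ≤ A l) (K : ℕ) (hK : 1 ≤ K)
    (S : Finset (Fin L)) : Cks A K S ≤ 4.5 * ((K : ℝ) * L * Amax A) := by
  have hAm : ∀ l, (A l : ℝ) ≤ (Amax A : ℝ) := fun l => by
    exact_mod_cast Finset.le_sup (f := A) (Finset.mem_univ l)
  have hk : (1:ℝ) ≤ K := by exact_mod_cast hK
  have hl : (1:ℝ) ≤ L := by exact_mod_cast hL
  have ha : (2:ℝ) ≤ Amax A := by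
    exact_mod_cast le_trans (hA ⟨0, hL⟩) (by exact_mod_cast hAm ⟨0, hL⟩)
  have hs' : (S.card:ℝ) ≤ L := by exact_mod_cast (by simpa using Finset.card_le_univ S : S.card ≤ L)
  have hs0 : (0:ℝ) ≤ S.card := by positivity
  set p : ℝ := (K : ℝ) * L * Amax A with hp
  have hp0 : 0 < p := by positivity
  have hD := Dks_le' hL A hA K hK S
  have hD0 : (0:ℝ) ≤ (Dks A K S : ℝ) := by positivity
  have T1 : Real.log (2 * Real.pi * Real.exp 1) * (Dks A K S : ℝ) ≤ 2.9 * p :=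
    mul_le_mul log2pie_le' hD hD0 (by norm_num)
  have hb1 : (if 2 ≤ K then (1:ℝ) else 0) ≤ 1 := by split <;> norm_num
  have hb0 : (0:ℝ) ≤ (if 2 ≤ K then (1:ℝ) else 0) := by split <;> norm_num
  have hfac : (if 2 ≤ K then (1:ℝ) else 0) + (L:ℝ) + ((K:ℝ) - 1) * S.card ≤ p := by
    have := fac_le' hk hl ha hs' hs0
    linarith
  have hfac0 : (0:ℝ) ≤ (if 2 ≤ K then (1:ℝ) else 0) + (L:ℝ) + ((K:ℝ) - 1) * S.card := by
    have : (0:ℝ) ≤ ((K:ℝ) - 1) * S.card := mul_nonneg (by linarith) hs0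
    positivity
  have T2 : Real.log (4 * Real.pi * Real.exp 1)
      * ((if 2 ≤ K then (1:ℝ) else 0) + (L:ℝ) + ((K:ℝ) - 1) * S.card) ≤ 3.6 * p :=
    mul_le_mul log4pie_le' hfac hfac0 (by norm_num)
  have T3 : (if 2 ≤ K then Real.log ((K:ℝ) + 1) else 0) ≤ (K:ℝ) := by
    split
    · have := Real.log_le_sub_one_of_pos (show (0:ℝ) < (K:ℝ) + 1 by positivity); linarith
    · positivity
  have hKp : (K:ℝ) ≤ p := by
    nlinarith [mul_nonneg (show (0:ℝ) ≤ (K:ℝ) by linarith) (show (0:ℝ) ≤ (L:ℝ) * (Amax A) - 1 by nlinarith)]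
  have hlogA : ∀ l : Fin L, Real.log ((A l : ℝ) + 1) ≤ (Amax A : ℝ) := fun l => by
    have := Real.log_le_sub_one_of_pos (show (0:ℝ) < (A l : ℝ) + 1 by positivity)
    have := hAm l; linarith
  have T4 : ∑ l, Real.log ((A l : ℝ) + 1) ≤ (L:ℝ) * Amax A := by
    calc ∑ l, Real.log ((A l : ℝ) + 1) ≤ ∑ _l : Fin L, (Amax A : ℝ) :=
          Finset.sum_le_sum (fun l _ => hlogA l)
      _ = (L:ℝ) * Amax A := by simp [Finset.sum_const, mul_comm]
  have T5 : ∑ l ∈ S, Real.log ((A l : ℝ) + 1) ≤ (S.card : ℝ) * Amax A := by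
    have := Finset.sum_le_card_nsmul S (fun l => Real.log ((A l : ℝ) + 1)) ((Amax A : ℝ))
      (fun l _ => hlogA l)
    simpa [nsmul_eq_mul] using this
  have T5' : ((K:ℝ) - 1) * ∑ l ∈ S, Real.log ((A l : ℝ) + 1)
      ≤ ((K:ℝ) - 1) * ((S.card : ℝ) * Amax A) :=
    mul_le_mul_of_nonneg_left T5 (by linarith)
  have hlast : (L:ℝ) * Amax A + ((K:ℝ) - 1) * ((S.card : ℝ) * Amax A) ≤ p := by
    nlinarith [mul_nonneg (mul_nonneg (sub_nonneg.mpr hk) (sub_nonneg.mpr hs')) (show (0:ℝ) ≤ Amax A by linarith)]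
  rw [Cks]
  linarith

set_option maxHeartbeats 1000000 in
/-- **Lemma 7.** Under the condition on `ξ`, any solution `σ ∈ (0, η(1)]` of
`φ_{(K,S)}(σ) = √n σ²` satisfies `σ < η(1)`. -/
theorem sigma_less_than_eta (L : ℕ) (hL : 1 ≤ L) (A : Fin L → ℕ) (hA : ∀ l, 2 ≤ A l)
    (K : ℕ) (S : Finset (Fin L)) (hm : (K, S) ∈ Mset L)
    (n : ℕ) (hn : 1 ≤ n) (η : ℝ → ℝ) (ξ : ℝ)
    (hcase :
      (η = etaCase1 L ∧
        ξ = 4 * Real.sqrt (Amax A) * Real.sqrt L / ((2 : ℝ) ^ (L + 1) - 1)) ∨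
      (η = etaCase2 L ∧
        ξ = 4 * Real.sqrt (Amax A) * Real.sqrt L / (2 * (1 + 3 * Real.sqrt 2) ^ L - 1)))
    -- `g` is the inverse function of `η`
    (g : ℝ → ℝ)
    (hg1 : ∀ x ∈ Set.Icc (0 : ℝ) 1, g (η x) = x)
    (hg2 : ∀ y ∈ Set.Icc 0 (η 1), g y ∈ Set.Icc (0 : ℝ) 1 ∧ η (g y) = y)
    (hcond : (ξ < 1 ∧ K ≤ n) ∨ (n : ℝ) > ξ ^ 2 * K) :
    Real.sqrt n * (η 1) ^ 2 > phiKS A K S g (η 1) ∧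
    ∀ σ ∈ Set.Ioc (0 : ℝ) (η 1), phiKS A K S g σ = Real.sqrt n * σ ^ 2 → σ < η 1 := by
  have hK1 : 1 ≤ K := by
    rcases hm with ⟨h, _⟩ | ⟨h, _⟩ <;> omega
  have hk : (1:ℝ) ≤ K := by exact_mod_cast hK1
  have hAm2 : 2 ≤ Amax A := le_trans (hA ⟨0, hL⟩) (Finset.le_sup (Finset.mem_univ _))
  have ha : (2:ℝ) ≤ Amax A := by exact_mod_cast hAm2
  have hl : (1:ℝ) ≤ L := by exact_mod_cast hL
  set p : ℝ := (K:ℝ) * L * Amax A with hp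
  have hD := Dks_le' hL A hA K hK1 S
  have hC := Cks_le' hL A hA K hK1 S
  have hsp : Real.sqrt p = Real.sqrt K * Real.sqrt L * Real.sqrt (Amax A) := by
    rw [hp, Real.sqrt_mul (by positivity), Real.sqrt_mul (by positivity)]
  have hRHS : 2 * Real.sqrt (Real.log 2) * Real.sqrt (Dks A K S : ℝ) + Real.sqrt (Cks A K S)
      ≤ 4 * Real.sqrt p := by
    have s1 : Real.sqrt (Dks A K S : ℝ) ≤ Real.sqrt p := Real.sqrt_le_sqrt hD
    have s2 : Real.sqrt (Cks A K S) ≤ Real.sqrt (4.5 * p) := Real.sqrt_le_sqrt hC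
    have s3 : Real.sqrt (4.5 * p) = Real.sqrt 4.5 * Real.sqrt p := Real.sqrt_mul (by norm_num) p
    have s4 : Real.sqrt (4.5:ℝ) ≤ 2.13 := by rw [Real.sqrt_le_iff]; norm_num
    have s5 : Real.sqrt (Real.log 2) ≤ 0.84 := by
      rw [Real.sqrt_le_iff]
      constructor
      · norm_num
      · nlinarith [Real.log_two_lt_d9]
    have q0 : 0 ≤ Real.sqrt p := Real.sqrt_nonneg p
    have d0 : 0 ≤ Real.sqrt (Dks A K S : ℝ) := Real.sqrt_nonneg _
    nlinarith [mul_le_mul s5 s1 d0 (by norm_num : (0:ℝ) ≤ 0.84),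
      mul_le_mul_of_nonneg_right s4 q0]
  obtain ⟨hd, hξη⟩ : 0 < η 1 ∧ ξ * η 1 = 4 * Real.sqrt (Amax A) * Real.sqrt L := by
    rcases hcase with ⟨hη, hξ⟩ | ⟨hη, hξ⟩
    · have hval : η 1 = (2:ℝ)^(L+1) - 1 := by rw [hη]; norm_num [etaCase1]
      have hpos : (0:ℝ) < (2:ℝ)^(L+1) - 1 := by
        have : (1:ℝ) < 2^(L+1) := one_lt_pow₀ (by norm_num) (by omega)
        linarith
      refine ⟨hval ▸ hpos, ?_⟩
      rw [hξ, hval, div_mul_cancel₀ _ (ne_of_gt hpos)]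
    · have hval : η 1 = 2*(1 + 3*Real.sqrt 2)^L - 1 := by
        rw [hη]
        unfold etaCase2
        rw [show (1:ℝ) + 2*Real.sqrt 2*1 + Real.sqrt 2*1^2 = 1 + 3*Real.sqrt 2 from by ring]
        norm_num
      have hpos : (0:ℝ) < 2*(1 + 3*Real.sqrt 2)^L - 1 := by
        have h : (1:ℝ) ≤ (1 + 3*Real.sqrt 2)^L := one_le_pow₀ (by nlinarith [Real.sqrt_nonneg 2])
        linarith
      refine ⟨hval ▸ hpos, ?_⟩
      rw [hξ, hval, div_mul_cancel₀ _ (ne_of_gt hpos)]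
  have hξ0 : 0 ≤ ξ := by
    by_contra h
    push_neg at h
    have hnum : 0 ≤ 4 * Real.sqrt ((Amax A : ℕ):ℝ) * Real.sqrt (L:ℝ) := by positivity
    nlinarith [mul_pos (neg_pos.mpr h) hd]
  have h4p : 4 * Real.sqrt p = ξ * η 1 * Real.sqrt K := by rw [hsp, hξη]; ring
  have hmain : 4 * Real.sqrt p < Real.sqrt n * η 1 := by
    rw [h4p]
    rcases hcond with ⟨hξ1, hKn⟩ | hn2
    · have h1 : Real.sqrt (K:ℝ) ≤ Real.sqrt (n:ℝ) := Real.sqrt_le_sqrt (by exact_mod_cast hKn)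
      have h2 : 0 < Real.sqrt (K:ℝ) := Real.sqrt_pos.mpr (by linarith)
      nlinarith [mul_pos hd h2, mul_nonneg (le_of_lt hd) (sub_nonneg.mpr h1)]
    · have h1 : ξ * Real.sqrt (K:ℝ) < Real.sqrt (n:ℝ) := by
        have h2 : Real.sqrt (ξ^2 * K) < Real.sqrt (n:ℝ) := Real.sqrt_lt_sqrt (by positivity) hn2
        rwa [Real.sqrt_mul (sq_nonneg ξ), Real.sqrt_sq hξ0] at h2
      nlinarith [mul_pos (sub_pos.mpr h1) hd]
  have hgη : g (η 1) = 1 := hg1 1 ⟨zero_le_one, le_rfl⟩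
  have hφ : phiKS A K S g (η 1)
      = (2 * Real.sqrt (Real.log 2) * Real.sqrt (Dks A K S : ℝ) + Real.sqrt (Cks A K S)) * η 1 := by
    simp only [phiKS, hgη, Real.log_one, mul_zero, sub_zero]
  have H1 : Real.sqrt n * (η 1)^2 > phiKS A K S g (η 1) := by
    rw [hφ]
    calc (2 * Real.sqrt (Real.log 2) * Real.sqrt (Dks A K S : ℝ) + Real.sqrt (Cks A K S)) * η 1
        ≤ (4 * Real.sqrt p) * η 1 := mul_le_mul_of_nonneg_right hRHS (le_of_lt hd)
      _ < (Real.sqrt n * η 1) * η 1 := mul_lt_mul_of_pos_right hmain hd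
      _ = Real.sqrt n * (η 1)^2 := by ring
  refine ⟨H1, fun σ hσ heq => ?_⟩
  rcases lt_or_eq_of_le hσ.2 with h | h
  · exact h
  · exfalso
    rw [h] at heq
    rw [heq] at H1
    exact lt_irrefl _ H1


end
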